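/- Let A be an associative unital F-algebra containing a U_q(su(2)) triple K, K⁻¹, J₊, J₋. Define in A ⊗ A the components ⁽¹⁾t_A = t_A ⊗ 1 and ⁽²⁾t₁ = K² ⊗ KJ₊, ⁽²⁾t₀ = −c⁻¹[1 ⊗ (s⁻¹J₊J₋ − sJ₋J₊) − (s − s⁻¹)(s + s⁻¹) KJ₋ ⊗ KJ₊], ⁽²⁾t₋₁ = −K⁻² ⊗ KJ₋ − s⁻¹(s − s⁻¹) K⁻¹J₋ ⊗ (s⁻¹J₊J₋ − sJ₋J₊) + s⁻¹(s − s⁻¹)² J₋² ⊗ KJ₊. Then the quantum scalar product factorizes: Σ_{m = −1,0,1} (−1)^{1−m} s^m · ⁽¹⁾t_m · ⁽²⁾t_{−m} = s² · (t^op₁ ⊗ t₋₁ + t^op₀ ⊗ t₀ + t^op₋₁ ⊗ t₁), i.e. ⁽¹⁾t · ⁽²⁾t = q Σ_A t^op_{−A} ⊗ t_A as an identity of elements of A ⊗ A. -/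

import Mathlib

/-!
STATEMENT 7: the quantum scalar product ⁽¹⁾t · ⁽²⁾t factorizes as
q Σ_A t^op_{−A} ⊗ t_A in A ⊗ A.
-/

open TensorProduct

variable {F : Type} [Field F] {A : Type} [Ring A] [Algebra F A]

set_option maxHeartbeats 2000000 in
theorem quantum_scalar_product_factorizes (s c : F)
    (hs : s ≠ 0) (hs' : s - s⁻¹ ≠ 0) (hc : c ≠ 0) (hc2 : c ^ 2 = s + s⁻¹)
    (K Ki Jp Jm : A)
    (hKKi : K * Ki = 1) (hKiK : Ki * K = 1)
    (hp : K * Jp * Ki = s • Jp) (hm : K * Jm * Ki = s⁻¹ • Jm)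
    (hcomm : Jp * Jm - Jm * Jp = (s - s⁻¹)⁻¹ • (K ^ 2 - Ki ^ 2))
    -- the vector operator t
    (t1 t0 tm1 : A)
    (ht1 : t1 = K * Jp)
    (ht0 : t0 = -(c⁻¹ • (s⁻¹ • (Jp * Jm) - s • (Jm * Jp))))
    (htm1 : tm1 = -(K * Jm))
    -- the operator t^op
    (top1 top0 topm1 : A)
    (htop1 : top1 = Jp * Ki)
    (htop0 : top0 = c⁻¹ • (s • (Jp * Jm) - s⁻¹ • (Jm * Jp)))
    (htopm1 : topm1 = -(Jm * Ki))
    -- the components of ⁽²⁾t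
    (t21 t20 t2m1 : A ⊗[F] A)
    (ht21 : t21 = (K ^ 2) ⊗ₜ[F] (K * Jp))
    (ht20 : t20 = -(c⁻¹ • ((1 : A) ⊗ₜ[F] (s⁻¹ • (Jp * Jm) - s • (Jm * Jp))
        - ((s - s⁻¹) * (s + s⁻¹)) • ((K * Jm) ⊗ₜ[F] (K * Jp)))))
    (ht2m1 : t2m1 = -((Ki ^ 2) ⊗ₜ[F] (K * Jm))
        - (s⁻¹ * (s - s⁻¹)) • ((Ki * Jm) ⊗ₜ[F] (s⁻¹ • (Jp * Jm) - s • (Jm * Jp)))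
        + (s⁻¹ * (s - s⁻¹) ^ 2) • ((Jm ^ 2) ⊗ₜ[F] (K * Jp))) :
    -- Σ_{m = −1,0,1} (−1)^{1−m} s^m ⁽¹⁾t_m ⁽²⁾t_{−m} = s² Σ_A t^op_{−A} ⊗ t_A
    s • ((t1 ⊗ₜ[F] (1 : A)) * t2m1)
      - (t0 ⊗ₜ[F] (1 : A)) * t20
      + s⁻¹ • ((tm1 ⊗ₜ[F] (1 : A)) * t21)
    = (s ^ 2) • (top1 ⊗ₜ[F] tm1 + top0 ⊗ₜ[F] t0 + topm1 ⊗ₜ[F] t1) := by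
  subst ht1 ht0 htm1 htop1 htop0 htopm1 ht21 ht20 ht2m1
  -- basic commutation relations
  have b1 : K * Jp = s • (Jp * K) := by
    linear_combination (norm := (simp only [smul_smul, smul_mul_assoc, mul_smul_comm, smul_sub, smul_add, smul_neg]; noncomm_ring)) hp * K - (K * Jp) * hKiK
  have b2 : K * Jm = s⁻¹ • (Jm * K) := by
    linear_combination (norm := (simp only [smul_smul, smul_mul_assoc, mul_smul_comm, smul_sub, smul_add, smul_neg]; noncomm_ring)) hm * K - (K * Jm) * hKiK
  have b3'' : Jm * Ki = s⁻¹ • (Ki * Jm) := by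
    linear_combination (norm := (simp only [smul_smul, smul_mul_assoc, mul_smul_comm, smul_sub, smul_add, smul_neg]; noncomm_ring)) Ki * hm - hKiK * (Jm * Ki)
  have b3 : Ki * Jm = s • (Jm * Ki) := by
    rw [b3'', smul_smul, mul_inv_cancel₀ hs, one_smul]
  have b2' : K ^ 2 * (Jm * K) = (s⁻¹ * s⁻¹) • (Jm * K ^ 3) := by
    linear_combination (norm := (simp only [smul_smul, smul_mul_assoc, mul_smul_comm, smul_sub, smul_add, smul_neg]; noncomm_ring)) K * b2 * K + s⁻¹ • (b2 * (K * K))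
  have b3' : Ki ^ 2 * (Jm * K) = (s * s) • (Jm * Ki) := by
    linear_combination (norm := (simp only [smul_smul, smul_mul_assoc, mul_smul_comm, smul_sub, smul_add, smul_neg]; noncomm_ring))
      Ki * b3 * K + s • (b3 * (Ki * K)) + (s * s) • ((Jm * Ki) * hKiK)
  -- rewriting lemmas for the words occurring in the goal
  have e1 : K * Jp * Ki ^ 2 = s • (Jp * Ki) := by
    linear_combination (norm := (simp only [smul_smul, smul_mul_assoc, mul_smul_comm, smul_sub, smul_add, smul_neg]; noncomm_ring)) hp * Ki
  have e2 : K * Jp * (Ki * Jm) = s • (Jp * Jm) := by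
    linear_combination (norm := (simp only [smul_smul, smul_mul_assoc, mul_smul_comm, smul_sub, smul_add, smul_neg]; noncomm_ring)) hp * Jm
  have e3 : K * Jp * Jm ^ 2 = (s * (s⁻¹ * s⁻¹)) • (Jp * Jm * (Jm * K)) := by
    linear_combination (norm := (simp only [smul_smul, smul_mul_assoc, mul_smul_comm, smul_sub, smul_add, smul_neg]; noncomm_ring))
      b1 * Jm ^ 2 + s • (Jp * b2 * Jm) + (s * s⁻¹) • (Jp * Jm * b2)
  have e4 : Jp * Jm * (K * Jm) = s⁻¹ • (Jp * Jm * (Jm * K)) := by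
    linear_combination (norm := (simp only [smul_smul, smul_mul_assoc, mul_smul_comm, smul_sub, smul_add, smul_neg]; noncomm_ring)) Jp * Jm * b2
  have e5 : Jm * Jp * (K * Jm) = s⁻¹ • (Jm * Jp * (Jm * K)) := by
    linear_combination (norm := (simp only [smul_smul, smul_mul_assoc, mul_smul_comm, smul_sub, smul_add, smul_neg]; noncomm_ring)) Jm * Jp * b2
  have e6 : K * Jm * K ^ 2 = s⁻¹ • (Jm * K ^ 3) := by
    linear_combination (norm := (simp only [smul_smul, smul_mul_assoc, mul_smul_comm, smul_sub, smul_add, smul_neg]; noncomm_ring)) b2 * K ^ 2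
  have e8 : Jp * Jm * (Jm * K) = Jm * Jp * (Jm * K)
      + ((s - s⁻¹)⁻¹ * (s⁻¹ * s⁻¹)) • (Jm * K ^ 3)
      - ((s - s⁻¹)⁻¹ * (s * s)) • (Jm * Ki) := by
    linear_combination (norm := (simp only [smul_smul, smul_mul_assoc, mul_smul_comm, smul_sub, smul_add, smul_neg]; noncomm_ring))
      hcomm * (Jm * K) + (s - s⁻¹)⁻¹ • b2' - (s - s⁻¹)⁻¹ • b3'
  simp only [Algebra.TensorProduct.tmul_mul_tmul, smul_tmul', tmul_smul, tmul_sub, sub_tmul,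
    tmul_neg, neg_tmul, tmul_add, add_tmul, mul_sub, sub_mul, mul_add, add_mul, mul_neg,
    neg_mul, smul_mul_assoc, mul_smul_comm, one_mul, mul_one, smul_smul, smul_sub, smul_neg,
    smul_add, neg_neg, neg_sub]
  rw [e1, e2, e3, e4, e5, e6, e8]
  simp only [add_tmul, sub_tmul, neg_tmul, ← smul_tmul', smul_smul, smul_add, smul_sub, smul_neg]
  have h2 : s + s⁻¹ ≠ 0 := hc2 ▸ pow_ne_zero 2 hc
  have hB : s ^ 2 - 1 ≠ 0 := by
    have e : s ^ 2 - 1 = (s - s⁻¹) * s := by field_simp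
    rw [e]; exact mul_ne_zero hs' hs
  have hA : 1 + s ^ 2 ≠ 0 := by
    have e : 1 + s ^ 2 = (s + s⁻¹) * s := by field_simp; ring
    rw [e]; exact mul_ne_zero h2 hs
  have hds : (s - s⁻¹)⁻¹ = s * (s ^ 2 - 1)⁻¹ := by
    rw [show s - s⁻¹ = (s ^ 2 - 1) * s⁻¹ by field_simp, mul_inv, inv_inv]; ring
  have hus : (s + s⁻¹)⁻¹ = s * (1 + s ^ 2)⁻¹ := by
    rw [show s + s⁻¹ = (1 + s ^ 2) * s⁻¹ by field_simp; ring, mul_inv, inv_inv]; ring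
  have hcc : c⁻¹ * c⁻¹ = (s + s⁻¹)⁻¹ := by
    rw [← hc2, ← mul_inv, ← sq]
  have hpair : ∀ x y : F, c⁻¹ * x * (c⁻¹ * y) = s * (1 + s ^ 2)⁻¹ * (x * y) := by
    intro x y; rw [← hus, ← hcc]; ring
  simp only [hpair, hds]
  have hC : s ^ 4 - 1 ≠ 0 := by
    have e : s ^ 4 - 1 = (s ^ 2 - 1) * (1 + s ^ 2) := by ring
    rw [e]; exact mul_ne_zero hB hA
  have p1 : s ^ 2 + s ^ 4 * 3 + s ^ 6 * 3 + s ^ 8 = s ^ 2 * (1 + s ^ 2) ^ 3 := by ring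
  have p2 : s ^ 4 + s ^ 6 * 2 + s ^ 8 = s ^ 4 * (1 + s ^ 2) ^ 2 := by ring
  have p3 : s ^ 8 - s ^ 12 * 2 + s ^ 16 = s ^ 8 * (s ^ 4 - 1) ^ 2 := by ring
  have p4 : s ^ 4 - s ^ 8 * 2 + s ^ 12 = s ^ 4 * (s ^ 4 - 1) ^ 2 := by ring
  have p5 : s ^ 2 + s ^ 4 = s ^ 2 * (1 + s ^ 2) := by ring
  have p6 : s ^ 4 + s ^ 6 = s ^ 4 * (1 + s ^ 2) := by ring
  have p7 : s + s ^ 3 = s * (1 + s ^ 2) := by ring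
  have p8 : s ^ 3 + s ^ 5 = s ^ 3 * (1 + s ^ 2) := by ring
  have hne1 : (1 + s ^ 2) * s * ((1 + s ^ 2) * (s * s * s)) ≠ 0 := by
    apply_rules [mul_ne_zero, hA, hB, hs]
  have hne2 : s * s ^ 2 * ((s ^ 2 - 1) * (s * s)) * ((1 + s ^ 2) * ((1 + s ^ 2) * s) * ((s ^ 2 - 1) * (s * s))) ≠ 0 := by
    apply_rules [mul_ne_zero, pow_ne_zero, hA, hB, hs]
  have hne3 : (1 + s ^ 2) * ((1 + s ^ 2) * ((1 + s ^ 2) * s)) * s ≠ 0 := by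
    apply_rules [mul_ne_zero, hA, hB, hs]
  have hne4 : s * s ^ 2 * (s ^ 2 - 1) * ((1 + s ^ 2) * ((1 + s ^ 2) * s) * (s ^ 2 - 1)) ≠ 0 := by
    apply_rules [mul_ne_zero, pow_ne_zero, hA, hB, hs]
  have hne5 : (1 + s ^ 2) * ((1 + s ^ 2) * s) * s ≠ 0 := by
    apply_rules [mul_ne_zero, hA, hB, hs]
  have hne6 : s * s ^ 2 * s ≠ 0 := by
    apply_rules [mul_ne_zero, pow_ne_zero, hA, hB, hs]
  have hne7 : (1 + s ^ 2) * ((1 + s ^ 2) * s) * ((s ^ 2 - 1) * (s * s)) ≠ 0 := by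
    apply_rules [mul_ne_zero, hA, hB, hs]
  have hne8 : s * s ^ 2 * ((s ^ 2 - 1) * (s * s)) ≠ 0 := by
    apply_rules [mul_ne_zero, pow_ne_zero, hA, hB, hs]
  have hne9 : (1 + s ^ 2) * ((1 + s ^ 2) * s) * (s ^ 2 - 1) ≠ 0 := by
    apply_rules [mul_ne_zero, hA, hB, hs]
  have hne10 : s * s ^ 2 * (s ^ 2 - 1) ≠ 0 := by
    apply_rules [mul_ne_zero, pow_ne_zero, hA, hB, hs]
  have hne11 : (1 + s ^ 2) * ((1 + s ^ 2) * s) * ((1 + s ^ 2) * s * ((1 + s ^ 2) * (s * s * s))) * s ≠ 0 := by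
    apply_rules [mul_ne_zero, hA, hB, hs]
  have hne12 : (1 + s ^ 2) * ((1 + s ^ 2) * s) * ((1 + s ^ 2) * s * ((1 + s ^ 2) * (s * s * s))) * ((s ^ 2 - 1) * (s * s)) ≠ 0 := by
    apply_rules [mul_ne_zero, hA, hB, hs]
  have hne13 : (1 + s ^ 2) * ((1 + s ^ 2) * s) * ((1 + s ^ 2) * s * ((1 + s ^ 2) * (s * s * s))) * (s ^ 2 - 1) ≠ 0 := by
    apply_rules [mul_ne_zero, hA, hB, hs]
  match_scalars
  all_goals field_simp
  all_goals try (exact Or.inl (by ring))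
  all_goals try ring1
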